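/- arXiv:1303.3596 — 4 statements merged into one kernel-verified Lean document; each statement's English description precedes it below -/
import Mathlib

section
/- The number of pairs of sequences (edge decorations e_2,...,e_{n-2} in {curved, straight}, vertex decorations v_2,...,v_{n-2} in {neutral, breaking}) satisfying the Enriques condition (if v_i is breaking then e_i and e_{i+1} are straight, where e_{n-1} is always straight) equals the Fibonacci number F_{2n-4}, for all n ≥ 3. -/
/-- Symbols of Enriques diagrams: `Sum.inl k` is the vertex `v_k`,
`Sum.inr k` is the edge `e_k`. -/
abbrev ESym : Type := ℕ ⊕ ℕ

def vtx (k : ℕ) : ESym := Sum.inl k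
def edg (k : ℕ) : ESym := Sum.inr k

/-- The set `S_n = {v_2,…,v_{n-2}, e_2,…,e_{n-2}}` of undetermined symbols. -/
def symbols (n : ℕ) : Finset ESym :=
  ((Finset.Icc 2 (n - 2)).image vtx) ∪ ((Finset.Icc 2 (n - 2)).image edg)

/-- A code of an Enriques diagram of complexity `n`: a subset `χ ⊆ S_n` such that
`v_i ∈ χ` implies `e_i ∈ χ` and (`e_{i+1} ∈ χ` or `i = n-2`). -/
def IsCode (n : ℕ) (χ : Finset ESym) : Prop :=
  χ ⊆ symbols n ∧
    ∀ i ∈ Finset.Icc 2 (n - 2), vtx i ∈ χ →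
      edg i ∈ χ ∧ (edg (i + 1) ∈ χ ∨ i = n - 2)

instance (n : ℕ) : DecidablePred (IsCode n) := fun χ => by
  unfold IsCode; infer_instance

lemma vtx_mem_symbols {n k : ℕ} : vtx k ∈ symbols n ↔ 2 ≤ k ∧ k ≤ n - 2 := by
  simp [symbols, vtx, edg, Finset.mem_Icc]
lemma edg_mem_symbols {n k : ℕ} : edg k ∈ symbols n ↔ 2 ≤ k ∧ k ≤ n - 2 := by
  simp [symbols, vtx, edg, Finset.mem_Icc]
lemma vtx_ne_edg {a b : ℕ} : vtx a ≠ edg b := by simp [vtx, edg]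
lemma edg_ne_vtx {a b : ℕ} : edg a ≠ vtx b := by simp [vtx, edg]
lemma vtx_inj {a b : ℕ} : vtx a = vtx b ↔ a = b := by simp [vtx]
lemma edg_inj {a b : ℕ} : edg a = edg b ↔ a = b := by simp [edg]

-- restriction: erase the two new symbols
lemma restrict_code {n : ℕ} (hn : 3 ≤ n) {χ : Finset ESym} (h : IsCode (n+1) χ) :
    IsCode n ((χ.erase (vtx (n-1))).erase (edg (n-1))) := by
  obtain ⟨hsub, hcond⟩ := h
  constructor
  · intro x hx
    have hx1 : x ≠ edg (n-1) := (Finset.mem_erase.mp hx).1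
    have hx2 : x ≠ vtx (n-1) := (Finset.mem_erase.mp (Finset.mem_erase.mp hx).2).1
    have hxχ : x ∈ χ := Finset.mem_of_mem_erase (Finset.mem_of_mem_erase hx)
    have hxs : x ∈ symbols (n+1) := hsub hxχ
    rcases x with k | k
    · have : 2 ≤ k ∧ k ≤ n + 1 - 2 := vtx_mem_symbols.mp hxs
      have hk : k ≠ n - 1 := fun e => hx2 (by rw [e]; rfl)
      exact vtx_mem_symbols.mpr ⟨this.1, by omega⟩
    · have : 2 ≤ k ∧ k ≤ n + 1 - 2 := edg_mem_symbols.mp hxs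
      have hk : k ≠ n - 1 := fun e => hx1 (by rw [e]; rfl)
      exact edg_mem_symbols.mpr ⟨this.1, by omega⟩
  · intro i hi hvi
    have hi' : i ∈ Finset.Icc 2 (n+1-2) := by
      rw [Finset.mem_Icc] at hi ⊢; omega
    have hile : i ≤ n - 2 := (Finset.mem_Icc.mp hi).2
    have hviχ : vtx i ∈ χ := Finset.mem_of_mem_erase (Finset.mem_of_mem_erase hvi)
    obtain ⟨he, hor⟩ := hcond i hi' hviχ
    constructor
    · refine Finset.mem_erase.mpr ⟨fun e => ?_, Finset.mem_erase.mpr ⟨edg_ne_vtx, he⟩⟩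
      rw [edg_inj] at e; omega
    · rcases hor with he1 | hie
      · by_cases hi2 : i = n - 2
        · exact Or.inr hi2
        · refine Or.inl (Finset.mem_erase.mpr ⟨fun e => ?_,
            Finset.mem_erase.mpr ⟨edg_ne_vtx, he1⟩⟩)
          rw [edg_inj] at e; omega
      · omega

-- extension lemmas
lemma codeA_code {n : ℕ} (hn : 3 ≤ n) {χ : Finset ESym} (h : IsCode n χ)
    (hv : vtx (n-2) ∉ χ) : IsCode (n+1) χ := by
  obtain ⟨hsub, hcond⟩ := h
  constructor
  · intro x hx
    have := hsub hx
    rcases x with k | k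
    · have := vtx_mem_symbols.mp this
      exact vtx_mem_symbols.mpr ⟨this.1, by omega⟩
    · have := edg_mem_symbols.mp this
      exact edg_mem_symbols.mpr ⟨this.1, by omega⟩
  · intro i hi hvi
    have hile : 2 ≤ i ∧ i ≤ n - 2 := by
      have := vtx_mem_symbols.mp (hsub hvi); exact this
    have hi2 : i ≠ n - 2 := fun e => hv (e ▸ hvi)
    obtain ⟨he, hor⟩ := hcond i (Finset.mem_Icc.mpr ⟨hile.1, hile.2⟩) hvi
    exact ⟨he, by rcases hor with h1 | h1; exact Or.inl h1; omega⟩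

lemma codeE_code {n : ℕ} (hn : 3 ≤ n) {χ : Finset ESym} (h : IsCode n χ) :
    IsCode (n+1) (insert (edg (n-1)) χ) := by
  obtain ⟨hsub, hcond⟩ := h
  constructor
  · intro x hx
    rcases Finset.mem_insert.mp hx with rfl | hx
    · exact edg_mem_symbols.mpr ⟨by omega, by omega⟩
    · have := hsub hx
      rcases x with k | k
      · have := vtx_mem_symbols.mp this
        exact vtx_mem_symbols.mpr ⟨this.1, by omega⟩
      · have := edg_mem_symbols.mp this
        exact edg_mem_symbols.mpr ⟨this.1, by omega⟩
  · intro i hi hvi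
    have hviχ : vtx i ∈ χ := by
      rcases Finset.mem_insert.mp hvi with e | h
      · exact absurd e vtx_ne_edg
      · exact h
    have hile : 2 ≤ i ∧ i ≤ n - 2 := vtx_mem_symbols.mp (hsub hviχ)
    obtain ⟨he, hor⟩ := hcond i (Finset.mem_Icc.mpr hile) hviχ
    refine ⟨Finset.mem_insert_of_mem he, ?_⟩
    rcases hor with h1 | h1
    · exact Or.inl (Finset.mem_insert_of_mem h1)
    · refine Or.inl (Finset.mem_insert.mpr (Or.inl ?_))
      rw [edg_inj]; omega

lemma codeVE_code {n : ℕ} (hn : 3 ≤ n) {χ : Finset ESym} (h : IsCode n χ) :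
    IsCode (n+1) (insert (vtx (n-1)) (insert (edg (n-1)) χ)) := by
  obtain ⟨hsub, hcond⟩ := codeE_code hn h
  constructor
  · intro x hx
    rcases Finset.mem_insert.mp hx with rfl | hx
    · exact vtx_mem_symbols.mpr ⟨by omega, by omega⟩
    · exact hsub hx
  · intro i hi hvi
    rcases Finset.mem_insert.mp hvi with e | hvi'
    · rw [vtx_inj] at e
      subst e
      refine ⟨Finset.mem_insert_of_mem (Finset.mem_insert_self _ _), Or.inr (by omega)⟩
    · obtain ⟨he, hor⟩ := hcond i hi hvi'
      refine ⟨Finset.mem_insert_of_mem he, ?_⟩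
      rcases hor with h1 | h1
      · exact Or.inl (Finset.mem_insert_of_mem h1)
      · exact Or.inr h1

def Codes (n : ℕ) : Finset (Finset ESym) := (symbols n).powerset.filter (IsCode n)

lemma mem_Codes {n : ℕ} {χ : Finset ESym} : χ ∈ Codes n ↔ IsCode n χ := by
  constructor
  · intro h; exact (Finset.mem_filter.mp h).2
  · intro h; exact Finset.mem_filter.mpr ⟨Finset.mem_powerset.mpr h.1, h⟩

lemma code_notMem_new {n : ℕ} (hn : 3 ≤ n) {χ : Finset ESym} (h : IsCode n χ) :
    vtx (n-1) ∉ χ ∧ edg (n-1) ∉ χ := by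
  constructor
  · intro hv; have := vtx_mem_symbols.mp (h.1 hv); omega
  · intro hv; have := edg_mem_symbols.mp (h.1 hv); omega

def CodesA (n : ℕ) : Finset (Finset ESym) := (Codes n).filter (fun χ => vtx (n-2) ∉ χ)

lemma codes_succ {n : ℕ} (hn : 3 ≤ n) :
    Codes (n+1) = (CodesA n ∪ (Codes n).image (insert (edg (n-1)))) ∪
      (Codes n).image (fun χ => insert (vtx (n-1)) (insert (edg (n-1)) χ)) := by
  ext χ
  simp only [Finset.mem_union, Finset.mem_image, CodesA, Finset.mem_filter, mem_Codes]
  constructor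
  · intro h
    by_cases hv : vtx (n-1) ∈ χ
    · -- contains both new symbols
      have he : edg (n-1) ∈ χ := by
        have hmem : (n-1) ∈ Finset.Icc 2 (n+1-2) := Finset.mem_Icc.mpr ⟨by omega, by omega⟩
        exact (h.2 (n-1) hmem hv).1
      refine Or.inr ⟨(χ.erase (vtx (n-1))).erase (edg (n-1)), restrict_code hn h, ?_⟩
      rw [Finset.insert_erase (Finset.mem_erase.mpr ⟨edg_ne_vtx, he⟩), Finset.insert_erase hv]
    · by_cases he : edg (n-1) ∈ χ
      · refine Or.inl (Or.inr ⟨(χ.erase (vtx (n-1))).erase (edg (n-1)), restrict_code hn h, ?_⟩)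
        rw [Finset.erase_eq_of_notMem hv, Finset.insert_erase he]
      · -- neither
        have hcode : IsCode n χ := by
          have := restrict_code hn h
          rwa [Finset.erase_eq_of_notMem hv, Finset.erase_eq_of_notMem he] at this
        refine Or.inl (Or.inl ⟨hcode, fun hv2 => ?_⟩)
        by_cases h4 : 4 ≤ n
        · have hmem : (n-2) ∈ Finset.Icc 2 (n+1-2) := Finset.mem_Icc.mpr ⟨by omega, by omega⟩
          obtain ⟨_, hor⟩ := h.2 (n-2) hmem hv2
          rcases hor with h1 | h1
          · exact he (by rwa [show n - 2 + 1 = n - 1 by omega] at h1)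
          · omega
        · have := vtx_mem_symbols.mp (h.1 hv2)
          omega
  · rintro ((⟨hcode, hv⟩ | ⟨ψ, hψ, rfl⟩) | ⟨ψ, hψ, rfl⟩)
    · exact codeA_code hn hcode hv
    · exact codeE_code hn hψ
    · exact codeVE_code hn hψ

def CodesB (n : ℕ) : Finset (Finset ESym) := (Codes n).filter (fun χ => vtx (n-2) ∈ χ)

lemma cardB_add_cardA (n : ℕ) : (CodesB n).card + (CodesA n).card = (Codes n).card := by
  rw [CodesB, CodesA]
  exact Finset.card_filter_add_card_filter_not (fun χ => vtx (n-2) ∈ χ)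

lemma mem_imgE {n : ℕ} (hn : 3 ≤ n) {χ : Finset ESym}
    (h : χ ∈ (Codes n).image (insert (edg (n-1)))) : vtx (n-1) ∉ χ ∧ edg (n-1) ∈ χ := by
  obtain ⟨ψ, hψ, rfl⟩ := Finset.mem_image.mp h
  have := code_notMem_new hn (mem_Codes.mp hψ)
  refine ⟨fun hv => ?_, Finset.mem_insert_self _ _⟩
  rcases Finset.mem_insert.mp hv with e | hv'
  · exact vtx_ne_edg e
  · exact this.1 hv'

lemma mem_imgVE {n : ℕ} {χ : Finset ESym}
    (h : χ ∈ (Codes n).image (fun χ => insert (vtx (n-1)) (insert (edg (n-1)) χ))) :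
    vtx (n-1) ∈ χ := by
  obtain ⟨ψ, hψ, rfl⟩ := Finset.mem_image.mp h
  exact Finset.mem_insert_self _ _

lemma mem_A_new {n : ℕ} (hn : 3 ≤ n) {χ : Finset ESym} (h : χ ∈ CodesA n) :
    vtx (n-1) ∉ χ ∧ edg (n-1) ∉ χ :=
  code_notMem_new hn (mem_Codes.mp (Finset.mem_filter.mp h).1)

lemma codesB_succ {n : ℕ} (hn : 3 ≤ n) :
    CodesB (n+1) = (Codes n).image (fun χ => insert (vtx (n-1)) (insert (edg (n-1)) χ)) := by
  have h21 : n + 1 - 2 = n - 1 := by omega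
  ext χ
  constructor
  · intro h
    obtain ⟨hχ, hv⟩ := Finset.mem_filter.mp h
    rw [h21] at hv
    rw [codes_succ hn] at hχ
    rcases Finset.mem_union.mp hχ with h1 | h1
    · rcases Finset.mem_union.mp h1 with h2 | h2
      · exact absurd hv (mem_A_new hn h2).1
      · exact absurd hv (mem_imgE hn h2).1
    · exact h1
  · intro h
    refine Finset.mem_filter.mpr ⟨?_, by rw [h21]; exact mem_imgVE h⟩
    rw [codes_succ hn]
    exact Finset.mem_union.mpr (Or.inr h)

lemma codesA_succ {n : ℕ} (hn : 3 ≤ n) :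
    CodesA (n+1) = CodesA n ∪ (Codes n).image (insert (edg (n-1))) := by
  have h21 : n + 1 - 2 = n - 1 := by omega
  ext χ
  constructor
  · intro h
    obtain ⟨hχ, hv⟩ := Finset.mem_filter.mp h
    rw [h21] at hv
    rw [codes_succ hn] at hχ
    rcases Finset.mem_union.mp hχ with h1 | h1
    · exact h1
    · exact absurd (mem_imgVE h1) hv
  · intro h
    refine Finset.mem_filter.mpr ⟨?_, ?_⟩
    · rw [codes_succ hn]; exact Finset.mem_union.mpr (Or.inl h)
    · rw [h21]
      rcases Finset.mem_union.mp h with h1 | h1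
      · exact (mem_A_new hn h1).1
      · exact (mem_imgE hn h1).1

lemma card_imgE {n : ℕ} (hn : 3 ≤ n) :
    ((Codes n).image (insert (edg (n-1)))).card = (Codes n).card := by
  apply Finset.card_image_of_injOn
  intro a ha b hb hab
  have hae : edg (n-1) ∉ a := (code_notMem_new hn (mem_Codes.mp ha)).2
  have hbe : edg (n-1) ∉ b := (code_notMem_new hn (mem_Codes.mp hb)).2
  have := congrArg (fun s => Finset.erase s (edg (n-1))) hab
  simpa [Finset.erase_insert hae, Finset.erase_insert hbe] using this

lemma card_imgVE {n : ℕ} (hn : 3 ≤ n) :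
    ((Codes n).image (fun χ => insert (vtx (n-1)) (insert (edg (n-1)) χ))).card
      = (Codes n).card := by
  apply Finset.card_image_of_injOn
  intro a ha b hb hab
  have hae : edg (n-1) ∉ a := (code_notMem_new hn (mem_Codes.mp ha)).2
  have hbe : edg (n-1) ∉ b := (code_notMem_new hn (mem_Codes.mp hb)).2
  have hav : vtx (n-1) ∉ insert (edg (n-1)) a := by
    intro h
    rcases Finset.mem_insert.mp h with e | h'
    · exact vtx_ne_edg e
    · exact (code_notMem_new hn (mem_Codes.mp ha)).1 h'
  have hbv : vtx (n-1) ∉ insert (edg (n-1)) b := by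
    intro h
    rcases Finset.mem_insert.mp h with e | h'
    · exact vtx_ne_edg e
    · exact (code_notMem_new hn (mem_Codes.mp hb)).1 h'
  have h2 := congrArg (fun s => Finset.erase s (vtx (n-1))) hab
  simp only [Finset.erase_insert hav, Finset.erase_insert hbv] at h2
  have h3 := congrArg (fun s => Finset.erase s (edg (n-1))) h2
  simpa [Finset.erase_insert hae, Finset.erase_insert hbe] using h3

lemma cardB_succ {n : ℕ} (hn : 3 ≤ n) : (CodesB (n+1)).card = (Codes n).card := by
  rw [codesB_succ hn, card_imgVE hn]

lemma cardA_succ {n : ℕ} (hn : 3 ≤ n) :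
    (CodesA (n+1)).card = (CodesA n).card + (Codes n).card := by
  rw [codesA_succ hn, Finset.card_union_of_disjoint, card_imgE hn]
  rw [Finset.disjoint_left]
  intro χ h1 h2
  exact (mem_A_new hn h1).2 (mem_imgE hn h2).2

lemma base_A : (CodesA 3).card = 1 := by decide
lemma base_B : (CodesB 3).card = 0 := by decide

lemma main_AB : ∀ n, 3 ≤ n →
    (CodesA n).card = Nat.fib (2*n - 5) ∧ (CodesB n).card = Nat.fib (2*n - 6) := by
  intro n hn
  induction n, hn using Nat.le_induction with
  | base => exact ⟨base_A, base_B⟩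
  | succ n hn ih =>
    obtain ⟨hA, hB⟩ := ih
    obtain ⟨m, hm⟩ : ∃ m, 2*n - 6 = m := ⟨_, rfl⟩
    have e1 : 2*n - 5 = m + 1 := by omega
    have e2 : 2*(n+1) - 6 = m + 2 := by omega
    have e3 : 2*(n+1) - 5 = m + 3 := by omega
    have hC : (Codes n).card = Nat.fib m + Nat.fib (m+1) := by
      rw [← cardB_add_cardA, hA, hB, hm, e1]
    constructor
    · rw [cardA_succ hn, hA, hC, e1, e3]
      rw [show m+3 = (m+1)+2 by ring, Nat.fib_add_two, Nat.fib_add_two]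
    · rw [cardB_succ hn, hC, e2, Nat.fib_add_two]


/-- The number of Enriques-diagram decoration patterns (codes) of complexity
`n ≥ 3` is the Fibonacci number `F_{2n-4}`. -/
theorem stmt0 (n : ℕ) (hn : 3 ≤ n) :
    ((symbols n).powerset.filter (IsCode n)).card = Nat.fib (2 * n - 4) := by
  obtain ⟨hA, hB⟩ := main_AB n hn
  have : ((symbols n).powerset.filter (IsCode n)).card = (Codes n).card := rfl
  rw [this, ← cardB_add_cardA, hA, hB]
  obtain ⟨m, hm⟩ : ∃ m, 2*n - 6 = m := ⟨_, rfl⟩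
  have e1 : 2*n - 5 = m + 1 := by omega
  have e2 : 2*n - 4 = m + 2 := by omega
  rw [hm, e1, e2, Nat.fib_add_two, Nat.add_comm]
end

section
/- The duality map Δ_n on codes, defined by: v_k ∈ Δ_n(χ) if and only if e_{n-k} ∉ χ, and e_k ∈ Δ_n(χ) if and only if v_{n-k} ∉ χ, maps codes of Enriques diagrams of complexity n to codes, is an involution, and reverses the inclusion partial order on K_n. -/
/-- The duality `Δ_n` on codes: `v_k ∈ Δ_n(χ)` iff `e_{n-k} ∉ χ`, and
`e_k ∈ Δ_n(χ)` iff `v_{n-k} ∉ χ` (for `k ∈ {2,…,n-2}`). -/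
def dual (n : ℕ) (χ : Finset ESym) : Finset ESym :=
  ((Finset.Icc 2 (n - 2)).filter (fun k => edg (n - k) ∉ χ)).image vtx ∪
  ((Finset.Icc 2 (n - 2)).filter (fun k => vtx (n - k) ∉ χ)).image edg

lemma mem_dual_vtx (n k : ℕ) (χ : Finset ESym) :
    vtx k ∈ dual n χ ↔ k ∈ Finset.Icc 2 (n - 2) ∧ edg (n - k) ∉ χ := by
  simp [dual, vtx, edg]
  exact Finset.mem_filter.trans (by simp)

lemma mem_dual_edg (n k : ℕ) (χ : Finset ESym) :
    edg k ∈ dual n χ ↔ k ∈ Finset.Icc 2 (n - 2) ∧ vtx (n - k) ∉ χ := by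
  simp [dual, vtx, edg]
  exact Finset.mem_filter.trans (by simp)

lemma mem_symbols_vtx (n k : ℕ) : vtx k ∈ symbols n ↔ k ∈ Finset.Icc 2 (n - 2) := by
  simp [symbols, vtx, edg]

lemma mem_symbols_edg (n k : ℕ) : edg k ∈ symbols n ↔ k ∈ Finset.Icc 2 (n - 2) := by
  simp [symbols, vtx, edg]


/-- The duality map `Δ_n` sends codes to codes, is an involution on codes, and
reverses the inclusion order on codes. -/
theorem stmt4 (n : ℕ) (hn : 3 ≤ n) :
    (∀ χ, IsCode n χ → IsCode n (dual n χ)) ∧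
    (∀ χ, IsCode n χ → dual n (dual n χ) = χ) ∧
    (∀ χ χ', IsCode n χ → IsCode n χ' → χ ⊆ χ' → dual n χ' ⊆ dual n χ) := by
  have hsub : ∀ χ, dual n χ ⊆ symbols n := by
    intro χ s hs
    rcases s with k | k
    · rw [show (Sum.inl k : ESym) = vtx k from rfl] at *
      rw [mem_symbols_vtx]; exact ((mem_dual_vtx n k χ).1 hs).1
    · rw [show (Sum.inr k : ESym) = edg k from rfl] at *
      rw [mem_symbols_edg]; exact ((mem_dual_edg n k χ).1 hs).1
  refine ⟨?_, ?_, ?_⟩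
  · intro χ ⟨hχs, hχ⟩
    refine ⟨hsub χ, ?_⟩
    intro i hi hv
    rw [mem_dual_vtx] at hv
    obtain ⟨_, he⟩ := hv
    simp only [Finset.mem_Icc] at hi
    constructor
    · rw [mem_dual_edg]
      refine ⟨by simp [Finset.mem_Icc]; omega, fun hvn => he (hχ _ (by simp [Finset.mem_Icc]; omega) hvn).1⟩
    · by_cases hlast : i = n - 2
      · exact Or.inr hlast
      left
      rw [mem_dual_edg]
      refine ⟨by simp [Finset.mem_Icc]; omega, fun hvn => ?_⟩
      have hj : n - (i + 1) ∈ Finset.Icc 2 (n - 2) := by simp [Finset.mem_Icc]; omega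
      rcases (hχ _ hj hvn).2 with h | h
      · rw [show n - (i + 1) + 1 = n - i by omega] at h; exact he h
      · omega
  · intro χ ⟨hχs, hχ⟩
    ext s
    rcases s with k | k
    · rw [show (Sum.inl k : ESym) = vtx k from rfl, mem_dual_vtx, mem_dual_edg]
      constructor
      · rintro ⟨hk, hne⟩
        simp only [Finset.mem_Icc] at hk
        by_contra hv
        exact hne ⟨by simp [Finset.mem_Icc]; omega, by rwa [show n - (n - k) = k by omega]⟩
      · intro hv
        have hk := (mem_symbols_vtx n k).1 (hχs hv)
        simp only [Finset.mem_Icc] at hk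
        refine ⟨by simp [Finset.mem_Icc]; omega, fun h => h.2 (by rwa [show n - (n - k) = k by omega])⟩
    · rw [show (Sum.inr k : ESym) = edg k from rfl, mem_dual_edg, mem_dual_vtx]
      constructor
      · rintro ⟨hk, hne⟩
        simp only [Finset.mem_Icc] at hk
        by_contra hv
        exact hne ⟨by simp [Finset.mem_Icc]; omega, by rwa [show n - (n - k) = k by omega]⟩
      · intro hv
        have hk := (mem_symbols_edg n k).1 (hχs hv)
        simp only [Finset.mem_Icc] at hk
        refine ⟨by simp [Finset.mem_Icc]; omega, fun h => h.2 (by rwa [show n - (n - k) = k by omega])⟩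
  · intro χ χ' _ _ hss s hs
    rcases s with k | k
    · rw [show (Sum.inl k : ESym) = vtx k from rfl, mem_dual_vtx] at *
      exact ⟨hs.1, fun h => hs.2 (hss h)⟩
    · rw [show (Sum.inr k : ESym) = edg k from rfl, mem_dual_edg] at *
      exact ⟨hs.1, fun h => hs.2 (hss h)⟩
end

section
/- The one-parameter family of the paper's lattices (K_n, ⊆) has sup-irreducible elements in canonical bijection with the poset whose Hasse diagram has vertices S_n and successor relations e_i ≺_s v_i (for 2 ≤ i ≤ n-2) and e_{i+1} ≺_s v_i (for 2 ≤ i ≤ n-3); concretely, the sup-irreducible elements of K_n are exactly the sets {e_i} for 2 ≤ i ≤ n-2, {v_i, e_i, e_{i+1}} for 2 ≤ i ≤ n-3, and {v_{n-2}, e_{n-2}}. -/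
/-- Sup-irreducibility in the lattice `K_n`: not the bottom element `∅`, and
not a join of two strictly smaller codes. -/
def SupIrredCode (n : ℕ) (χ : Finset ESym) : Prop :=
  IsCode n χ ∧ χ ≠ ∅ ∧
    ∀ a b : Finset ESym, IsCode n a → IsCode n b → χ = a ∪ b → χ = a ∨ χ = b

namespace SupIrrAux

lemma mem_symbols {n : ℕ} {x : ESym} :
    x ∈ symbols n ↔ (∃ i, 2 ≤ i ∧ i ≤ n - 2 ∧ x = vtx i) ∨
      (∃ i, 2 ≤ i ∧ i ≤ n - 2 ∧ x = edg i) := by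
  simp only [symbols, Finset.mem_union, Finset.mem_image, Finset.mem_Icc]
  constructor
  · rintro (⟨i, ⟨h1, h2⟩, rfl⟩ | ⟨i, ⟨h1, h2⟩, rfl⟩)
    · exact Or.inl ⟨i, h1, h2, rfl⟩
    · exact Or.inr ⟨i, h1, h2, rfl⟩
  · rintro (⟨i, h1, h2, rfl⟩ | ⟨i, h1, h2, rfl⟩)
    · exact Or.inl ⟨i, ⟨h1, h2⟩, rfl⟩
    · exact Or.inr ⟨i, ⟨h1, h2⟩, rfl⟩

lemma vtx_mem_symbols {n i : ℕ} (h : vtx i ∈ symbols n) : 2 ≤ i ∧ i ≤ n - 2 := by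
  rcases mem_symbols.1 h with ⟨j, h1, h2, hj⟩ | ⟨j, _, _, hj⟩
  · cases hj; exact ⟨h1, h2⟩
  · simp [vtx, edg] at hj

lemma edg_mem_symbols {n i : ℕ} (h : edg i ∈ symbols n) : 2 ≤ i ∧ i ≤ n - 2 := by
  rcases mem_symbols.1 h with ⟨j, _, _, hj⟩ | ⟨j, h1, h2, hj⟩
  · simp [vtx, edg] at hj
  · cases hj; exact ⟨h1, h2⟩

lemma vtx_mem_symbols' {n i : ℕ} (h1 : 2 ≤ i) (h2 : i ≤ n - 2) : vtx i ∈ symbols n :=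
  mem_symbols.2 (Or.inl ⟨i, h1, h2, rfl⟩)

lemma edg_mem_symbols' {n i : ℕ} (h1 : 2 ≤ i) (h2 : i ≤ n - 2) : edg i ∈ symbols n :=
  mem_symbols.2 (Or.inr ⟨i, h1, h2, rfl⟩)

lemma empty_code (n : ℕ) : IsCode n ∅ :=
  ⟨Finset.empty_subset _, by simp⟩

lemma union_code {n : ℕ} {a b : Finset ESym} (ha : IsCode n a) (hb : IsCode n b) :
    IsCode n (a ∪ b) := by
  refine ⟨Finset.union_subset ha.1 hb.1, ?_⟩
  intro i hi hv
  rcases Finset.mem_union.1 hv with h | h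
  · obtain ⟨h1, h2⟩ := ha.2 i hi h
    exact ⟨Finset.mem_union_left _ h1, h2.imp (Finset.mem_union_left _) id⟩
  · obtain ⟨h1, h2⟩ := hb.2 i hi h
    exact ⟨Finset.mem_union_right _ h1, h2.imp (Finset.mem_union_right _) id⟩

lemma sup_code {n : ℕ} (f : ESym → Finset ESym) (s : Finset ESym)
    (h : ∀ x ∈ s, IsCode n (f x)) : IsCode n (s.sup f) := by
  induction s using Finset.induction_on with
  | empty => simpa using empty_code n
  | @insert a s ha ih =>
    rw [Finset.sup_insert, Finset.sup_eq_union]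
    exact union_code (h a (Finset.mem_insert_self a s))
      (ih fun x hx => h x (Finset.mem_insert_of_mem hx))

/-- The principal code generated by a symbol. -/
def gen (n : ℕ) : ESym → Finset ESym
  | Sum.inr i => {edg i}
  | Sum.inl i => if i = n - 2 then {vtx i, edg i} else {vtx i, edg i, edg (i + 1)}

lemma self_mem_gen (n : ℕ) (x : ESym) : x ∈ gen n x := by
  cases x with
  | inl i =>
    simp only [gen]
    split <;> simp [vtx]
  | inr i => simp [gen, edg]

lemma gen_subset {n : ℕ} {χ : Finset ESym} (hχ : IsCode n χ) {x : ESym} (hx : x ∈ χ) :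
    gen n x ⊆ χ := by
  cases x with
  | inr i =>
    simp only [gen]
    intro y hy; rw [Finset.mem_singleton] at hy; subst hy; exact hx
  | inl i =>
    have hi : 2 ≤ i ∧ i ≤ n - 2 := vtx_mem_symbols (hχ.1 hx)
    have hcond := hχ.2 i (Finset.mem_Icc.2 hi) hx
    simp only [gen]
    split_ifs with h
    · intro y hy
      rcases Finset.mem_insert.1 hy with rfl | hy
      · exact hx
      · rw [Finset.mem_singleton] at hy; subst hy; exact hcond.1
    · intro y hy
      rcases Finset.mem_insert.1 hy with rfl | hy
      · exact hx
      rcases Finset.mem_insert.1 hy with rfl | hy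
      · exact hcond.1
      · rw [Finset.mem_singleton] at hy; subst hy
        rcases hcond.2 with h' | h'
        · exact h'
        · exact absurd h' h

lemma gen_code {n : ℕ} {χ : Finset ESym} (hχ : IsCode n χ) {x : ESym} (hx : x ∈ χ) :
    IsCode n (gen n x) := by
  cases x with
  | inr i =>
    refine ⟨?_, ?_⟩
    · intro y hy
      simp only [gen, Finset.mem_singleton] at hy; subst hy
      exact hχ.1 hx
    · intro j _ hj
      simp [gen, vtx, edg] at hj
  | inl i =>
    have hi : 2 ≤ i ∧ i ≤ n - 2 := vtx_mem_symbols (hχ.1 hx)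
    refine ⟨?_, ?_⟩
    · intro y hy
      simp only [gen] at hy
      split at hy
      · rcases Finset.mem_insert.1 hy with rfl | hy
        · exact vtx_mem_symbols' hi.1 hi.2
        · rw [Finset.mem_singleton] at hy; subst hy
          exact edg_mem_symbols' hi.1 hi.2
      · rcases Finset.mem_insert.1 hy with rfl | hy
        · exact vtx_mem_symbols' hi.1 hi.2
        rcases Finset.mem_insert.1 hy with rfl | hy
        · exact edg_mem_symbols' hi.1 hi.2
        · rw [Finset.mem_singleton] at hy; subst hy
          refine edg_mem_symbols' (by omega) ?_
          rename_i hne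
          omega
    · intro j _ hj
      simp only [gen] at hj ⊢
      split at hj <;> rename_i h
      · have : j = i := by
          rcases Finset.mem_insert.1 hj with h' | h'
          · exact (Sum.inl.injEq _ _ ▸ h' : _)
          · simp [vtx, edg] at h'
        subst this
        split
        · exact ⟨by simp [vtx, edg], Or.inr h⟩
        · exact ⟨by simp [vtx, edg], Or.inr h⟩
      · have : j = i := by
          rcases Finset.mem_insert.1 hj with h' | h'
          · exact (Sum.inl.injEq _ _ ▸ h' : _)
          rcases Finset.mem_insert.1 h' with h'' | h'' <;> simp [vtx, edg] at h''
        subst this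
        rw [if_neg h]
        constructor
        · simp [vtx, edg]
        · left; simp [vtx, edg]

lemma supIrred_of_sup {n : ℕ} {χ : Finset ESym} (h : SupIrredCode n χ)
    (f : ESym → Finset ESym) (s : Finset ESym)
    (hcodes : ∀ x ∈ s, IsCode n (f x)) (hsup : χ = s.sup f) :
    ∃ x ∈ s, χ = f x := by
  induction s using Finset.induction_on with
  | empty =>
    exfalso; exact h.2.1 (by simpa using hsup)
  | @insert a s ha ih =>
    rw [Finset.sup_insert, Finset.sup_eq_union] at hsup
    rcases h.2.2 (f a) (s.sup f) (hcodes a (Finset.mem_insert_self a s))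
        (sup_code f s fun x hx => hcodes x (Finset.mem_insert_of_mem hx)) hsup with
      h' | h'
    · exact ⟨a, Finset.mem_insert_self a s, h'⟩
    · obtain ⟨x, hx, hfx⟩ := ih (fun x hx => hcodes x (Finset.mem_insert_of_mem hx)) h'
      exact ⟨x, Finset.mem_insert_of_mem hx, hfx⟩

end SupIrrAux

open SupIrrAux in
/-- The sup-irreducible elements of `K_n` are exactly `{e_i}` for `2 ≤ i ≤ n-2`,
`{v_i, e_i, e_{i+1}}` for `2 ≤ i ≤ n-3`, and `{v_{n-2}, e_{n-2}}`. -/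
theorem stmt8 (n : ℕ) (hn : 4 ≤ n) (χ : Finset ESym) :
    SupIrredCode n χ ↔
      ((∃ i, 2 ≤ i ∧ i ≤ n - 2 ∧ χ = {edg i}) ∨
       (∃ i, 2 ≤ i ∧ i ≤ n - 3 ∧ χ = {vtx i, edg i, edg (i + 1)}) ∨
       χ = {vtx (n - 2), edg (n - 2)}) := by
  constructor
  · intro h
    have hχ : IsCode n χ := h.1
    have hsup : χ = χ.sup (gen n) := by
      apply le_antisymm
      · intro y hy
        exact Finset.le_sup (f := gen n) hy (self_mem_gen n y)
      · exact Finset.sup_le fun x hx => gen_subset hχ hx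
    obtain ⟨x, hx, hgen⟩ :=
      supIrred_of_sup h (gen n) χ (fun x hx => gen_code hχ hx) hsup
    cases x with
    | inr i =>
      have hi := edg_mem_symbols (hχ.1 hx)
      exact Or.inl ⟨i, hi.1, hi.2, by simpa [gen] using hgen⟩
    | inl i =>
      have hi := vtx_mem_symbols (hχ.1 hx)
      by_cases hcase : i = n - 2
      · subst hcase
        right; right
        simpa [gen] using hgen
      · right; left
        exact ⟨i, hi.1, by omega, by rw [hgen]; simp [gen, hcase]⟩
  · rintro (⟨i, h1, h2, rfl⟩ | ⟨i, h1, h2, rfl⟩ | rfl)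
    · refine ⟨⟨?_, ?_⟩, by simp, ?_⟩
      · simpa using edg_mem_symbols' h1 h2
      · intro j _ hj; simp [vtx, edg] at hj
      · intro a b ha hb hab
        have : edg i ∈ a ∪ b := by rw [← hab]; simp
        rcases Finset.mem_union.1 this with h' | h'
        · left
          apply le_antisymm
          · intro y hy
            rw [Finset.mem_singleton] at hy; subst hy; exact h'
          · rw [hab]; exact Finset.subset_union_left
        · right
          apply le_antisymm
          · intro y hy
            rw [Finset.mem_singleton] at hy; subst hy; exact h'
          · rw [hab]; exact Finset.subset_union_right
    · have hi2 : i ≤ n - 2 := by omega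
      have hine : i ≠ n - 2 := by omega
      have hvmem : ∀ j, vtx j ∈ ({vtx i, edg i, edg (i + 1)} : Finset ESym) → j = i := by
        intro j hj
        rcases Finset.mem_insert.1 hj with h' | h'
        · exact (Sum.inl.injEq _ _ ▸ h' : _)
        rcases Finset.mem_insert.1 h' with h'' | h'' <;> simp [vtx, edg] at h''
      refine ⟨⟨?_, ?_⟩, by simp, ?_⟩
      · intro y hy
        rcases Finset.mem_insert.1 hy with rfl | hy
        · exact vtx_mem_symbols' h1 hi2
        rcases Finset.mem_insert.1 hy with rfl | hy
        · exact edg_mem_symbols' h1 hi2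
        · rw [Finset.mem_singleton] at hy; subst hy
          exact edg_mem_symbols' (by omega) (by omega)
      · intro j _ hj
        have := hvmem j hj; subst this
        exact ⟨by simp [vtx, edg], Or.inl (by simp [vtx, edg])⟩
      · intro a b ha hb hab
        have hv : vtx i ∈ a ∪ b := by rw [← hab]; simp
        have key : ∀ c : Finset ESym, IsCode n c → vtx i ∈ c →
            c ⊆ {vtx i, edg i, edg (i + 1)} → ({vtx i, edg i, edg (i + 1)} : Finset ESym) = c := by
          intro c hc hvc hsub
          have hcond := hc.2 i (Finset.mem_Icc.2 ⟨h1, hi2⟩) hvc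
          have he1 : edg (i + 1) ∈ c := by
            rcases hcond.2 with h' | h'
            · exact h'
            · exact absurd h' hine
          apply le_antisymm _ hsub
          intro y hy
          rcases Finset.mem_insert.1 hy with rfl | hy
          · exact hvc
          rcases Finset.mem_insert.1 hy with rfl | hy
          · exact hcond.1
          · rw [Finset.mem_singleton] at hy; subst hy; exact he1
        rcases Finset.mem_union.1 hv with h' | h'
        · exact Or.inl (key a ha h' (hab ▸ Finset.subset_union_left))
        · exact Or.inr (key b hb h' (hab ▸ Finset.subset_union_right))
    · have h1 : 2 ≤ n - 2 := by omega
      refine ⟨⟨?_, ?_⟩, by simp, ?_⟩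
      · intro y hy
        rcases Finset.mem_insert.1 hy with rfl | hy
        · exact vtx_mem_symbols' h1 le_rfl
        · rw [Finset.mem_singleton] at hy; subst hy
          exact edg_mem_symbols' h1 le_rfl
      · intro j _ hj
        have : j = n - 2 := by
          rcases Finset.mem_insert.1 hj with h' | h'
          · exact (Sum.inl.injEq _ _ ▸ h' : _)
          · simp [vtx, edg] at h'
        subst this
        exact ⟨by simp [vtx, edg], Or.inr rfl⟩
      · intro a b ha hb hab
        have hv : vtx (n - 2) ∈ a ∪ b := by rw [← hab]; simp
        have key : ∀ c : Finset ESym, IsCode n c → vtx (n - 2) ∈ c →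
            c ⊆ {vtx (n - 2), edg (n - 2)} →
            ({vtx (n - 2), edg (n - 2)} : Finset ESym) = c := by
          intro c hc hvc hsub
          have hcond := hc.2 (n - 2) (Finset.mem_Icc.2 ⟨h1, le_rfl⟩) hvc
          apply le_antisymm _ hsub
          intro y hy
          rcases Finset.mem_insert.1 hy with rfl | hy
          · exact hvc
          · rw [Finset.mem_singleton] at hy; subst hy; exact hcond.1
        rcases Finset.mem_union.1 hv with h' | h'
        · exact Or.inl (key a ha h' (hab ▸ Finset.subset_union_left))
        · exact Or.inr (key b hb h' (hab ▸ Finset.subset_union_right))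
end

section
/- A lattice is distributive if and only if it contains no sublattice isomorphic to the diamond lattice M_3 or the pentagon lattice N_5. -/
section Aux
variable {α : Type*} [Lattice α]

/-- The pentagon relations force all five elements to be distinct. -/
lemma n5_nodup {o i a b c : α} (hba : b < a) (hac : a ⊓ c = o) (hbc : b ⊓ c = o)
    (hai : a ⊔ c = i) (hbi : b ⊔ c = i) : ([o, i, a, b, c] : List α).Nodup := by
  have hob : o ≤ b := hbc ▸ inf_le_left
  have haiL : a ≤ i := hai ▸ le_sup_left
  have hoc : o ≤ c := hac ▸ inf_le_right
  have hci : c ≤ i := hai ▸ le_sup_right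
  have hoi : o ≠ i := by
    intro h
    exact absurd ((hob.trans_lt hba).trans_le haiL) (h ▸ lt_irrefl i)
  have hoa : o ≠ a := by
    intro h; exact (h ▸ hob).not_gt hba
  have hob' : o ≠ b := by
    intro h
    -- b ⊓ c = b so b ≤ c, then i = b ⊔ c = c, then a ≤ c so a ⊓ c = a = o, contra
    have h1 : b ≤ c := inf_eq_left.mp (h ▸ hbc)
    have h2 : c = i := by rw [← hbi, sup_eq_right.mpr h1]
    have h3 : a ≤ c := h2 ▸ haiL
    have h4 : a = o := by rw [← hac, inf_eq_left.mpr h3]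
    exact (h4 ▸ hba).not_ge (h ▸ hob)
  have hoc' : o ≠ c := by
    intro h
    have h1 : c ≤ b := h ▸ hob
    have h2 : b = i := by rw [← hbi, sup_eq_left.mpr h1]
    exact ((hba.trans_le haiL).trans_le h2.ge).false
  have hia : i ≠ a := by
    intro h
    have h1 : c ≤ a := h ▸ hci
    have h2 : c = o := by rw [← hac, inf_eq_right.mpr h1]
    have h3 : c ≤ b := h2 ▸ hob
    have h4 : b = i := by rw [← hbi, sup_eq_left.mpr h3]
    exact (hba.trans_le (h ▸ h4.ge)).false
  have hib : i ≠ b := by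
    intro h
    exact (hba.trans_le haiL).ne' h
  have hic : i ≠ c := by
    intro h
    have h1 : a ≤ c := h ▸ haiL
    have h2 : a = o := by rw [← hac, inf_eq_left.mpr h1]
    exact ((h2 ▸ hba).trans_le hob).false
  have hab : a ≠ b := hba.ne'
  have hac' : a ≠ c := by
    intro h
    have h2 : a = o := by rw [← hac, ← h, inf_idem]
    exact ((h2 ▸ hba).trans_le hob).false
  have hbc' : b ≠ c := by
    intro h
    have h2 : b = i := by rw [← hbi, ← h, sup_idem]
    exact (hba.trans_le haiL).ne h2
  simp [List.nodup_cons, hoi, hoa, hob', hoc', hia, hib, hic, hab, hac', hbc']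

/-- The diamond relations together with `o ≠ i` force all five elements to be distinct. -/
lemma m3_nodup {o i a b c : α} (hoi : o ≠ i)
    (hab : a ⊓ b = o) (hac : a ⊓ c = o) (hbc : b ⊓ c = o)
    (sab : a ⊔ b = i) (sac : a ⊔ c = i) (sbc : b ⊔ c = i) :
    ([o, i, a, b, c] : List α).Nodup := by
  have hoa : o ≤ a := hab ▸ inf_le_left
  have hob : o ≤ b := hab ▸ inf_le_right
  have hoc : o ≤ c := hac ▸ inf_le_right
  have hai : a ≤ i := sab ▸ le_sup_left
  have hbi : b ≤ i := sab ▸ le_sup_right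
  have hci : c ≤ i := sac ▸ le_sup_right
  -- if two of a,b,c coincide then o = i
  have habne : a ≠ b := by
    intro h; apply hoi; rw [← hab, h, inf_idem, ← sab, h, sup_idem]
  have hacne : a ≠ c := by
    intro h; apply hoi; rw [← hac, h, inf_idem, ← sac, h, sup_idem]
  have hbcne : b ≠ c := by
    intro h; apply hoi; rw [← hbc, h, inf_idem, ← sbc, h, sup_idem]
  -- o distinct from a, b, c
  have hoa' : o ≠ a := by
    intro h
    apply hoi
    have h1 : c = i := by rw [← sac, ← h, sup_eq_right.mpr hoc]
    have h2 : b = o := by rw [← hbc, h1, inf_eq_left.mpr hbi]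
    rw [← sab, ← h, ← h2, sup_idem, h2]
  have hob' : o ≠ b := by
    intro h
    apply hoi
    have h1 : c = i := by rw [← sbc, ← h, sup_eq_right.mpr hoc]
    have h2 : a = o := by rw [← hac, h1, inf_eq_left.mpr hai]
    rw [← sab, ← h, ← h2, sup_idem, h2]
  have hoc' : o ≠ c := by
    intro h
    apply hoi
    have h1 : b = i := by rw [← sbc, ← h, sup_eq_left.mpr hob]
    have h2 : a = o := by rw [← hab, h1, inf_eq_left.mpr hai]
    rw [← sac, ← h, ← h2, sup_idem, h2]
  have hia : i ≠ a := by
    intro h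
    apply hoi
    have h1 : c = o := by rw [← hac, ← h, inf_eq_right.mpr hci]
    have h2 : b = i := by rw [← sbc, h1, sup_eq_left.mpr hob]
    rw [← hab, ← h, ← h2, inf_idem, h2]
  have hib : i ≠ b := by
    intro h
    apply hoi
    have h1 : c = o := by rw [← hbc, ← h, inf_eq_right.mpr hci]
    have h2 : a = i := by rw [← sac, h1, sup_eq_left.mpr hoa]
    rw [← hab, ← h, ← h2, inf_idem, h2]
  have hic : i ≠ c := by
    intro h
    apply hoi
    have h1 : b = o := by rw [← hbc, ← h, inf_eq_left.mpr hbi]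
    have h2 : a = i := by rw [← sab, h1, sup_eq_left.mpr hoa]
    rw [← hac, ← h, ← h2, inf_idem, h2]
  simp [List.nodup_cons, hoi, hoa', hob', hoc', hia, hib, hic, habne, hacne, hbcne]

end Aux

section Aux2
variable {α : Type*} [Lattice α]

/-- Dual form of the modular law. -/
lemma mod_dual (mod : ∀ x y z : α, z ≤ x → x ⊓ (y ⊔ z) = (x ⊓ y) ⊔ z)
    (x y z : α) (h : x ≤ z) : x ⊔ (y ⊓ z) = (x ⊔ y) ⊓ z := by
  refine le_antisymm (le_inf (sup_le le_sup_left (inf_le_left.trans le_sup_right))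
    (sup_le h inf_le_right)) ?_
  have h1 := mod z y x h
  calc (x ⊔ y) ⊓ z = z ⊓ (y ⊔ x) := by rw [inf_comm, sup_comm]
    _ = (z ⊓ y) ⊔ x := h1
    _ ≤ x ⊔ (y ⊓ z) := sup_le ((inf_comm z y).le.trans le_sup_right) le_sup_left

/-- Key computation for the diamond construction in a modular lattice. -/
lemma m3_key (mod : ∀ x y z : α, z ≤ x → x ⊓ (y ⊔ z) = (x ⊓ y) ⊔ z) (a b c : α) :
    ((a ⊓ (((a ⊔ b) ⊓ (b ⊔ c)) ⊓ (c ⊔ a))) ⊔ (((a ⊓ b) ⊔ (b ⊓ c)) ⊔ (c ⊓ a))) ⊓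
      ((b ⊓ (((a ⊔ b) ⊓ (b ⊔ c)) ⊓ (c ⊔ a))) ⊔ (((a ⊓ b) ⊔ (b ⊓ c)) ⊔ (c ⊓ a))) =
      ((a ⊓ b) ⊔ (b ⊓ c)) ⊔ (c ⊓ a) ∧
    ((a ⊓ (((a ⊔ b) ⊓ (b ⊔ c)) ⊓ (c ⊔ a))) ⊔ (((a ⊓ b) ⊔ (b ⊓ c)) ⊔ (c ⊓ a))) ⊔
      ((b ⊓ (((a ⊔ b) ⊓ (b ⊔ c)) ⊓ (c ⊔ a))) ⊔ (((a ⊓ b) ⊔ (b ⊓ c)) ⊔ (c ⊓ a))) =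
      ((a ⊔ b) ⊓ (b ⊔ c)) ⊓ (c ⊔ a) := by
  set o := ((a ⊓ b) ⊔ (b ⊓ c)) ⊔ (c ⊓ a) with ho
  set i := ((a ⊔ b) ⊓ (b ⊔ c)) ⊓ (c ⊔ a) with hi
  set x := (a ⊓ i) ⊔ o with hx
  set y := (b ⊓ i) ⊔ o with hy
  have hoi : o ≤ i := by
    refine sup_le (sup_le ?_ ?_) ?_
    · exact le_inf (le_inf (inf_le_left.trans le_sup_left) (inf_le_right.trans le_sup_left))
        (inf_le_left.trans le_sup_right)
    · exact le_inf (le_inf (inf_le_left.trans le_sup_right) (inf_le_left.trans le_sup_left))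
        (inf_le_right.trans le_sup_left)
    · exact le_inf (le_inf (inf_le_right.trans le_sup_left) (inf_le_left.trans le_sup_right))
        (inf_le_left.trans le_sup_left)
  constructor
  · -- x ⊓ y = o
    have h4 : x ⊓ y = (x ⊓ (b ⊓ i)) ⊔ o := mod x (b ⊓ i) o le_sup_right
    have hao : a ⊔ o = a ⊔ (b ⊓ c) := by
      refine le_antisymm (sup_le le_sup_left (sup_le (sup_le
        (inf_le_left.trans le_sup_left) le_sup_right) (inf_le_right.trans le_sup_left))) ?_
      exact sup_le le_sup_left ((le_sup_right.trans le_sup_left).trans le_sup_right)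
    have h5 : b ⊓ (a ⊔ (b ⊓ c)) = (b ⊓ a) ⊔ (b ⊓ c) := mod b a (b ⊓ c) inf_le_left
    have h6 : x ⊓ b ≤ o := by
      calc x ⊓ b ≤ (a ⊔ o) ⊓ b := inf_le_inf_right b (sup_le_sup_right inf_le_left o)
        _ = b ⊓ (a ⊔ (b ⊓ c)) := by rw [inf_comm, hao]
        _ = (b ⊓ a) ⊔ (b ⊓ c) := h5
        _ ≤ o := sup_le ((inf_comm b a).le.trans (le_sup_left.trans le_sup_left))
            (le_sup_right.trans le_sup_left)
    rw [h4]
    exact sup_eq_right.mpr ((inf_le_inf_left x inf_le_left).trans h6)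
  · -- x ⊔ y = i
    have hxi : x ≤ i := sup_le inf_le_right hoi
    have hyi : y ≤ i := sup_le inf_le_right hoi
    have hai' : a ⊓ i = a ⊓ (b ⊔ c) := by
      refine le_antisymm (le_inf inf_le_left (inf_le_right.trans (inf_le_left.trans inf_le_right))) ?_
      exact le_inf inf_le_left (le_inf (le_inf (inf_le_left.trans le_sup_left) inf_le_right)
        (inf_le_left.trans le_sup_right))
    have h7 : (a ⊓ (b ⊔ c)) ⊔ b = (a ⊔ b) ⊓ (b ⊔ c) := by
      have := mod_dual mod b a (b ⊔ c) le_sup_left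
      rw [sup_comm, this, sup_comm b a]
    have h8 : (a ⊓ i) ⊔ (b ⊓ i) = ((a ⊓ i) ⊔ b) ⊓ i := mod_dual mod (a ⊓ i) b i inf_le_right
    have h9 : i ≤ (a ⊓ i) ⊔ (b ⊓ i) := by
      rw [h8, hai', h7]
      exact le_inf inf_le_left le_rfl
    exact le_antisymm (sup_le hxi hyi)
      (h9.trans (sup_le_sup le_sup_left le_sup_left))

/-- In a modular lattice, `a ⊓ o = (a ⊓ b) ⊔ (a ⊓ c)`. -/
lemma m3_ao (mod : ∀ x y z : α, z ≤ x → x ⊓ (y ⊔ z) = (x ⊓ y) ⊔ z) (a b c : α) :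
    a ⊓ (((a ⊓ b) ⊔ (b ⊓ c)) ⊔ (c ⊓ a)) = (a ⊓ b) ⊔ (a ⊓ c) := by
  calc a ⊓ (((a ⊓ b) ⊔ (b ⊓ c)) ⊔ (c ⊓ a))
      = (a ⊓ ((a ⊓ b) ⊔ (b ⊓ c))) ⊔ (c ⊓ a) := mod a ((a ⊓ b) ⊔ (b ⊓ c)) (c ⊓ a) inf_le_right
    _ = (a ⊓ ((b ⊓ c) ⊔ (a ⊓ b))) ⊔ (c ⊓ a) := by rw [sup_comm (a ⊓ b)]
    _ = ((a ⊓ (b ⊓ c)) ⊔ (a ⊓ b)) ⊔ (c ⊓ a) := by rw [mod a (b ⊓ c) (a ⊓ b) inf_le_left]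
    _ = (a ⊓ b) ⊔ (a ⊓ c) := by
        rw [sup_eq_right.mpr (show a ⊓ (b ⊓ c) ≤ a ⊓ b from
          le_inf inf_le_left (inf_le_right.trans inf_le_left)), inf_comm c a]

/-- A modular but non-distributive triple yields a diamond. -/
lemma diamond (mod : ∀ x y z : α, z ≤ x → x ⊓ (y ⊔ z) = (x ⊓ y) ⊔ z) (a b c : α)
    (hne : a ⊓ (b ⊔ c) ≠ (a ⊓ b) ⊔ (a ⊓ c)) :
    ∃ o i x y z : α, ([o, i, x, y, z] : List α).Nodup ∧
      x ⊓ y = o ∧ x ⊓ z = o ∧ y ⊓ z = o ∧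
      x ⊔ y = i ∧ x ⊔ z = i ∧ y ⊔ z = i := by
  set o := ((a ⊓ b) ⊔ (b ⊓ c)) ⊔ (c ⊓ a) with ho
  set i := ((a ⊔ b) ⊓ (b ⊔ c)) ⊓ (c ⊔ a) with hi
  set x := (a ⊓ i) ⊔ o with hx
  set y := (b ⊓ i) ⊔ o with hy
  set z := (c ⊓ i) ⊔ o with hz
  have hOb : ((b ⊓ c) ⊔ (c ⊓ a)) ⊔ (a ⊓ b) = o := by rw [ho]; ac_rfl
  have hIb : ((b ⊔ c) ⊓ (c ⊔ a)) ⊓ (a ⊔ b) = i := by rw [hi]; ac_rfl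
  have hOc : ((c ⊓ a) ⊔ (a ⊓ b)) ⊔ (b ⊓ c) = o := by rw [ho]; ac_rfl
  have hIc : ((c ⊔ a) ⊓ (a ⊔ b)) ⊓ (b ⊔ c) = i := by rw [hi]; ac_rfl
  have key1 := m3_key mod a b c
  have key2 := m3_key mod b c a
  have key3 := m3_key mod c a b
  rw [hOb, hIb] at key2
  rw [hOc, hIc] at key3
  have hxy : x ⊓ y = o := key1.1
  have hyz : y ⊓ z = o := key2.1
  have hzx : z ⊓ x = o := key3.1
  have sxy : x ⊔ y = i := key1.2
  have syz : y ⊔ z = i := key2.2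
  have szx : z ⊔ x = i := key3.2
  have hxz : x ⊓ z = o := by rw [inf_comm]; exact hzx
  have sxz : x ⊔ z = i := by rw [sup_comm]; exact szx
  have hoi : o ≠ i := by
    intro h
    apply hne
    have h1 : a ⊓ i = a ⊓ (b ⊔ c) := by
      refine le_antisymm (le_inf inf_le_left (inf_le_right.trans (inf_le_left.trans inf_le_right))) ?_
      exact le_inf inf_le_left (le_inf (le_inf (inf_le_left.trans le_sup_left) inf_le_right)
        (inf_le_left.trans le_sup_right))
    rw [← h1, ← h, ho, m3_ao mod a b c]
  exact ⟨o, i, x, y, z, m3_nodup hoi hxy hxz hyz sxy sxz syz, hxy, hxz, hyz, sxy, sxz, syz⟩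

/-- A failure of modularity yields a pentagon. -/
lemma pentagon {x y z : α} (hzx : z ≤ x) (hne : x ⊓ (y ⊔ z) ≠ (x ⊓ y) ⊔ z) :
    ∃ o i a b c : α, ([o, i, a, b, c] : List α).Nodup ∧
      b < a ∧ a ⊓ c = o ∧ b ⊓ c = o ∧ a ⊔ c = i ∧ b ⊔ c = i := by
  set a := x ⊓ (y ⊔ z) with ha
  set b := (x ⊓ y) ⊔ z with hb
  have hba : b < a := lt_of_le_of_ne
    (sup_le (le_inf inf_le_left (inf_le_right.trans le_sup_left)) (le_inf hzx le_sup_right))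
    (Ne.symm hne)
  have hac : a ⊓ y = x ⊓ y := by
    rw [ha, inf_assoc, inf_eq_right.mpr (le_sup_left : y ≤ y ⊔ z)]
  have hbc : b ⊓ y = x ⊓ y := by
    refine le_antisymm ((inf_le_inf_right y hba.le).trans hac.le) ?_
    exact le_inf le_sup_left inf_le_right
  have hai : a ⊔ y = y ⊔ z := by
    refine le_antisymm (sup_le inf_le_right le_sup_left) ?_
    exact sup_le le_sup_right ((le_sup_right.trans hba.le).trans le_sup_left)
  have hbi : b ⊔ y = y ⊔ z := by
    refine le_antisymm (sup_le (hba.le.trans inf_le_right) le_sup_left) ?_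
    exact sup_le le_sup_right (le_sup_right.trans le_sup_left)
  exact ⟨x ⊓ y, y ⊔ z, a, b, y, n5_nodup hba hac hbc hai hbi, hba, hac, hbc, hai, hbi⟩

end Aux2

/-- A lattice is distributive iff it contains no sublattice isomorphic to the
diamond `M₃` or the pentagon `N₅`. -/
theorem stmt13 {α : Type*} [Lattice α] :
    ((∀ a b c : α, a ⊓ (b ⊔ c) = (a ⊓ b) ⊔ (a ⊓ c)) ∧
      (∀ a b c : α, a ⊔ (b ⊓ c) = (a ⊔ b) ⊓ (a ⊔ c))) ↔
    ¬ ((∃ o i a b c : α, ([o, i, a, b, c] : List α).Nodup ∧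
          a ⊓ b = o ∧ a ⊓ c = o ∧ b ⊓ c = o ∧
          a ⊔ b = i ∧ a ⊔ c = i ∧ b ⊔ c = i) ∨
        (∃ o i a b c : α, ([o, i, a, b, c] : List α).Nodup ∧
          b < a ∧ a ⊓ c = o ∧ b ⊓ c = o ∧ a ⊔ c = i ∧ b ⊔ c = i)) := by
  constructor
  · rintro ⟨hinf, -⟩
      (⟨o, i, a, b, c, hnd, hab, hac, hbc, sab, sac, sbc⟩ |
        ⟨o, i, a, b, c, hnd, hba, hac, hbc, sai, sbi⟩)
    · have hao : a = o := by
        calc a = a ⊓ i := (inf_eq_left.mpr (sab ▸ le_sup_left)).symm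
          _ = a ⊓ (b ⊔ c) := by rw [sbc]
          _ = (a ⊓ b) ⊔ (a ⊓ c) := hinf a b c
          _ = o := by rw [hab, hac, sup_idem]
      rw [hao] at hnd
      simp at hnd
    · have hab' : a = b := by
        calc a = a ⊓ i := (inf_eq_left.mpr (sai ▸ le_sup_left)).symm
          _ = a ⊓ (b ⊔ c) := by rw [sbi]
          _ = (a ⊓ b) ⊔ (a ⊓ c) := hinf a b c
          _ = b ⊔ o := by rw [inf_eq_right.mpr hba.le, hac]
          _ = b := sup_eq_left.mpr (hbc ▸ inf_le_left)
      exact hba.ne' hab'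
  · intro h
    have hinf : ∀ a b c : α, a ⊓ (b ⊔ c) = (a ⊓ b) ⊔ (a ⊓ c) := by
      by_cases hmod : ∀ x y z : α, z ≤ x → x ⊓ (y ⊔ z) = (x ⊓ y) ⊔ z
      · intro a b c
        by_contra hne
        exact h (Or.inl (diamond hmod a b c hne))
      · exfalso
        push_neg at hmod
        obtain ⟨x, y, z, hzx, hne⟩ := hmod
        exact h (Or.inr (pentagon hzx hne))
    refine ⟨hinf, ?_⟩
    letI : DistribLattice α := DistribLattice.ofInfSupLe fun a b c => (hinf a b c).le
    exact fun a b c => sup_inf_left a b c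
end
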